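/- arXiv:2406.14218 — 3 statements merged into one kernel-verified Lean document; each statement's English description precedes it below -/
import Mathlib

section
/- Let p > 1 and κ = (p−1)^{-1/(p−1)}. Define Ñ : ℝ → ℝ by Ñ(s) = |κ+s|^{p−1}(κ+s) − κᵖ − pκ^{p−1}s for s ≥ −κ, and Ñ(s) = (p−1)κᵖ − 2pκ^{p−1}(κ+s) + (κ+s)² for s < −κ. Then Ñ is a convex function on ℝ. -/
open Real

/-- `κ = (p−1)^{-1/(p−1)}`. -/
noncomputable def kappa (p : ℝ) : ℝ := (p - 1) ^ (-(1 / (p - 1)) : ℝ)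

/-- The truncated nonlinearity `Ñ`. -/
noncomputable def Ntil (p : ℝ) (s : ℝ) : ℝ :=
  if -(kappa p) ≤ s then
    |kappa p + s| ^ (p - 1) * (kappa p + s) - (kappa p) ^ p -
      p * (kappa p) ^ (p - 1) * s
  else
    (p - 1) * (kappa p) ^ p - 2 * p * (kappa p) ^ (p - 1) * (kappa p + s) +
      (kappa p + s) ^ 2

/-- Affine functions are convex on the whole line. -/
lemma convexOn_affine (m b : ℝ) : ConvexOn ℝ Set.univ (fun s : ℝ => m * s + b) := by
  refine ⟨convex_univ, fun x _ y _ a c ha hc hac => ?_⟩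
  simp only [smul_eq_mul]
  apply le_of_eq
  linear_combination (-b) * hac

/-- `s ↦ max (a + s) 0` is convex on the whole line. -/
lemma convexOn_posPart_shift (a : ℝ) :
    ConvexOn ℝ Set.univ (fun s : ℝ => max (a + s) 0) := by
  have h1 : ConvexOn ℝ Set.univ (fun s : ℝ => a + s) := by
    have := convexOn_affine 1 a
    simpa [add_comm, one_mul] using this
  have h2 : ConvexOn ℝ Set.univ (fun _ : ℝ => (0 : ℝ)) := convexOn_const 0 convex_univ
  simpa [Pi.sup_def] using h1.sup h2

/-- `s ↦ max (-(a + s)) 0` is convex on the whole line. -/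
lemma convexOn_negPart_shift (a : ℝ) :
    ConvexOn ℝ Set.univ (fun s : ℝ => max (-(a + s)) 0) := by
  have h1 : ConvexOn ℝ Set.univ (fun s : ℝ => -(a + s)) := by
    have := convexOn_affine (-1) (-a)
    convert this using 2 with s
    ring
  have h2 : ConvexOn ℝ Set.univ (fun _ : ℝ => (0 : ℝ)) := convexOn_const 0 convex_univ
  simpa [Pi.sup_def] using h1.sup h2

lemma range_posPart_shift (a : ℝ) :
    (fun s : ℝ => max (a + s) 0) '' Set.univ = Set.Ici 0 := by
  rw [Set.image_univ]
  ext u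
  simp only [Set.mem_range, Set.mem_Ici]
  constructor
  · rintro ⟨s, rfl⟩
    exact le_max_right _ _
  · intro hu
    refine ⟨u - a, ?_⟩
    rw [show a + (u - a) = u by ring]
    exact max_eq_left hu

lemma range_negPart_shift (a : ℝ) :
    (fun s : ℝ => max (-(a + s)) 0) '' Set.univ = Set.Ici 0 := by
  rw [Set.image_univ]
  ext u
  simp only [Set.mem_range, Set.mem_Ici]
  constructor
  · rintro ⟨s, rfl⟩
    exact le_max_right _ _
  · intro hu
    refine ⟨-u - a, ?_⟩
    rw [show a + (-u - a) = -u by ring, neg_neg]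
    exact max_eq_left hu

/-- Composition of a convex monotone function on `[0,∞)` with a convex
function whose range is all of `[0,∞)`. -/
lemma convexOn_comp_of_range (F : ℝ → ℝ) (f : ℝ → ℝ)
    (hF : ConvexOn ℝ (Set.Ici 0) F) (hmono : MonotoneOn F (Set.Ici 0))
    (hf : ConvexOn ℝ Set.univ f) (hrange : f '' Set.univ = Set.Ici 0) :
    ConvexOn ℝ Set.univ (fun s => F (f s)) := by
  have := ConvexOn.comp (g := F) (f := f) (s := Set.univ)
    (by rw [hrange]; exact hF) hf (by rw [hrange]; exact hmono)
  exact this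

theorem Ntil_convex (p : ℝ) (hp : 1 < p) : ConvexOn ℝ Set.univ (Ntil p) := by
  have hp1 : (0 : ℝ) < p - 1 := by linarith
  have hκpos : 0 < kappa p := Real.rpow_pos_of_pos hp1 _
  have hκp1pos : (0 : ℝ) < kappa p ^ (p - 1) := Real.rpow_pos_of_pos hκpos _
  set c : ℝ := p * kappa p ^ (p - 1) with hcdef
  have hcpos : 0 < c := by positivity
  -- key rpow identity
  have hmul : kappa p ^ (p - 1) * kappa p = kappa p ^ p := by
    calc kappa p ^ (p - 1) * kappa p
        = kappa p ^ (p - 1) * kappa p ^ (1 : ℝ) := by rw [Real.rpow_one]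
      _ = kappa p ^ ((p - 1) + 1) := (Real.rpow_add hκpos _ _).symm
      _ = kappa p ^ p := by norm_num
  have hck : c * kappa p = p * kappa p ^ p := by
    rw [hcdef, mul_assoc, hmul]
  -- F₁ = rpow p, F₂ u = u^2 + c*u
  have hF1conv : ConvexOn ℝ (Set.Ici 0) (fun u : ℝ => u ^ p) :=
    convexOn_rpow (le_of_lt hp)
  have hF1mono : MonotoneOn (fun u : ℝ => u ^ p) (Set.Ici 0) := by
    intro x hx y _ hxy
    exact Real.rpow_le_rpow hx hxy (by linarith)
  have hF2conv : ConvexOn ℝ (Set.Ici 0) (fun u : ℝ => u ^ 2 + c * u) := by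
    have h1 : ConvexOn ℝ (Set.Ici 0) (fun u : ℝ => u ^ 2) := convexOn_pow 2
    have h2 : ConvexOn ℝ (Set.Ici 0) (fun u : ℝ => c * u + 0) :=
      (convexOn_affine c 0).subset (Set.subset_univ _) (convex_Ici 0)
    have h3 := h1.add h2
    simp at h3
    exact h3
  have hF2mono : MonotoneOn (fun u : ℝ => u ^ 2 + c * u) (Set.Ici 0) := by
    intro x hx y hy hxy
    simp only [Set.mem_Ici] at hx hy
    dsimp only
    nlinarith [mul_nonneg (sub_nonneg.2 hxy) (by linarith : (0:ℝ) ≤ y + x + c)]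
  -- the two convex pieces
  have hφ : ConvexOn ℝ Set.univ (fun s : ℝ => (max (kappa p + s) 0) ^ p) :=
    convexOn_comp_of_range _ _ hF1conv hF1mono (convexOn_posPart_shift (kappa p))
      (range_posPart_shift (kappa p))
  have hψ : ConvexOn ℝ Set.univ
      (fun s : ℝ => (max (-(kappa p + s)) 0) ^ 2 + c * max (-(kappa p + s)) 0) :=
    convexOn_comp_of_range _ _ hF2conv hF2mono (convexOn_negPart_shift (kappa p))
      (range_negPart_shift (kappa p))
  have haff : ConvexOn ℝ Set.univ
      (fun s : ℝ => (-c) * s + ((p - 1) * kappa p ^ p - c * kappa p)) :=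
    convexOn_affine _ _
  have hg : ConvexOn ℝ Set.univ (fun s : ℝ =>
      (max (kappa p + s) 0) ^ p
      + ((max (-(kappa p + s)) 0) ^ 2 + c * max (-(kappa p + s)) 0)
      + ((-c) * s + ((p - 1) * kappa p ^ p - c * kappa p))) := by
    have := (hφ.add hψ).add haff
    simpa [Pi.add_def] using this
  -- pointwise identity
  have heq : Ntil p = fun s : ℝ =>
      (max (kappa p + s) 0) ^ p
      + ((max (-(kappa p + s)) 0) ^ 2 + c * max (-(kappa p + s)) 0)
      + ((-c) * s + ((p - 1) * kappa p ^ p - c * kappa p)) := by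
    funext s
    rw [Ntil]
    by_cases hs : -(kappa p) ≤ s
    · rw [if_pos hs]
      have ht : 0 ≤ kappa p + s := by linarith
      have habs : |kappa p + s| = kappa p + s := abs_of_nonneg ht
      have hmax1 : max (kappa p + s) 0 = kappa p + s := max_eq_left ht
      have hmax2 : max (-(kappa p + s)) 0 = 0 := max_eq_right (by linarith)
      have hts : |kappa p + s| ^ (p - 1) * (kappa p + s) = (kappa p + s) ^ p := by
        rw [habs]
        rcases eq_or_lt_of_le ht with h | h
        · rw [← h, Real.zero_rpow (by linarith : p - 1 ≠ 0),
            Real.zero_rpow (by linarith : p ≠ 0), mul_zero]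
        · calc (kappa p + s) ^ (p - 1) * (kappa p + s)
              = (kappa p + s) ^ (p - 1) * (kappa p + s) ^ (1 : ℝ) := by
                rw [Real.rpow_one]
            _ = (kappa p + s) ^ ((p - 1) + 1) := (Real.rpow_add h _ _).symm
            _ = (kappa p + s) ^ p := by norm_num
      rw [hts, hmax1, hmax2]
      linear_combination hck
    · rw [if_neg hs]
      push_neg at hs
      have ht : kappa p + s < 0 := by linarith
      have hmax1 : max (kappa p + s) 0 = 0 := max_eq_right (le_of_lt ht)
      have hmax2 : max (-(kappa p + s)) 0 = -(kappa p + s) := max_eq_left (by linarith)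
      rw [hmax1, hmax2, Real.zero_rpow (by linarith : p ≠ 0)]
      linear_combination
  rw [heq]
  exact hg
end

section
/- Let p > 1, κ = (p−1)^{-1/(p−1)}, and define Ñ as in the piecewise formula: Ñ(s) = |κ+s|^{p−1}(κ+s) − κᵖ − pκ^{p−1}s for s ≥ −κ and Ñ(s) = (p−1)κᵖ − 2pκ^{p−1}(κ+s) + (κ+s)² for s < −κ. Then Ñ(s) > 0 for all s > 0, and there exists S > 1 such that Ñ(s) > sᵖ/2 for all s > S. -/
open Real

lemma kappa_pos {p : ℝ} (hp : 1 < p) : 0 < kappa p :=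
  rpow_pos_of_pos (by linarith) _

lemma bern {p : ℝ} (hp : 1 < p) {s : ℝ} (hs : 0 < s) :
    (kappa p) ^ p + p * (kappa p) ^ (p - 1) * s < (kappa p + s) ^ p := by
  have hκ := kappa_pos hp
  have ht : (0:ℝ) < s / kappa p := div_pos hs hκ
  have h := one_add_mul_self_lt_rpow_one_add (by linarith : (-1:ℝ) ≤ s / kappa p)
    (ne_of_gt ht) hp
  have hmul : (kappa p) ^ p * (1 + p * (s / kappa p)) <
      (kappa p) ^ p * (1 + s / kappa p) ^ p :=
    (mul_lt_mul_iff_right₀ (rpow_pos_of_pos hκ p)).mpr h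
  have e1 : (kappa p) ^ p * (1 + s / kappa p) ^ p = (kappa p + s) ^ p := by
    rw [← mul_rpow (le_of_lt hκ) (by positivity)]
    congr 1
    field_simp
  have e2 : (kappa p) ^ p * (1 + p * (s / kappa p)) =
      (kappa p) ^ p + p * (kappa p) ^ (p - 1) * s := by
    rw [rpow_sub_one (ne_of_gt hκ)]
    field_simp
  rw [e1, e2] at hmul
  exact hmul

lemma Ntil_eq {p : ℝ} (hp : 1 < p) {s : ℝ} (hs : 0 < s) :
    Ntil p s = (kappa p + s) ^ p - (kappa p) ^ p - p * (kappa p) ^ (p - 1) * s := by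
  have hκ := kappa_pos hp
  have hpos : 0 < kappa p + s := by linarith
  rw [Ntil, if_pos (by linarith), abs_of_pos hpos, rpow_sub_one (ne_of_gt hpos)]
  field_simp

theorem Ntil_pos_and_superlinear (p : ℝ) (hp : 1 < p) :
    (∀ s : ℝ, 0 < s → 0 < Ntil p s) ∧
    ∃ S : ℝ, 1 < S ∧ ∀ s : ℝ, S < s → s ^ p / 2 < Ntil p s := by
  have hκ := kappa_pos hp
  have hC : (0:ℝ) < 2 * ((kappa p) ^ p + p * (kappa p) ^ (p - 1)) := by positivity
  set C := 2 * ((kappa p) ^ p + p * (kappa p) ^ (p - 1)) with hCdef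
  constructor
  · intro s hs
    rw [Ntil_eq hp hs]
    have := bern hp hs
    linarith
  · refine ⟨max 1 (C ^ (1 / (p - 1) : ℝ)) + 1, by linarith [le_max_left (1:ℝ) (C ^ (1/(p-1) : ℝ))], ?_⟩
    intro s hS
    have hs1 : (1:ℝ) < s := by linarith [le_max_left (1:ℝ) (C ^ ((1:ℝ) / (p-1)))]
    have hs : 0 < s := by linarith
    rw [Ntil_eq hp hs]
    -- s^{p-1} > C
    have hCs : C < s ^ (p - 1 : ℝ) := by
      have h1 : C ^ (1 / (p - 1) : ℝ) < s := by
        have := le_max_right (1:ℝ) (C ^ (1 / (p-1) : ℝ))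
        linarith
      have h2 : (C ^ (1 / (p - 1) : ℝ)) ^ (p - 1 : ℝ) < s ^ (p - 1 : ℝ) :=
        rpow_lt_rpow (by positivity) h1 (by linarith)
      rwa [← rpow_mul (le_of_lt hC), one_div_mul_cancel (by linarith : p - 1 ≠ 0),
        rpow_one] at h2
    -- (κ+s)^p ≥ s^p
    have hmono : s ^ p ≤ (kappa p + s) ^ p :=
      rpow_le_rpow (le_of_lt hs) (by linarith) (by linarith)
    -- s^p = s^{p-1} * s
    have hsplit : s ^ p = s ^ (p - 1 : ℝ) * s := by
      rw [rpow_sub_one (ne_of_gt hs)]; field_simp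
    have hlin : (kappa p) ^ p + p * (kappa p) ^ (p - 1) * s ≤ (C / 2) * s := by
      rw [hCdef]
      have h1 : (kappa p) ^ p ≤ (kappa p) ^ p * s :=
        le_mul_of_one_le_right (by positivity) (le_of_lt hs1)
      ring_nf
      nlinarith [rpow_pos_of_pos hκ p, rpow_pos_of_pos hκ (p-1)]
    have : (C / 2) * s < s ^ p / 2 := by
      rw [hsplit]
      have := mul_lt_mul_of_pos_right hCs hs
      linarith
    linarith
end

section
/- There exists C > 0 such that for every f in the weighted Sobolev space H¹_ρ(ℝⁿ) (with ρ(z) = e^{-|z|²/4}), one has ∫_{ℝⁿ} |z|² f(z)² e^{-|z|²/4} dz ≤ C (‖f‖²_ρ + ‖∇f‖²_ρ). -/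
open MeasureTheory Real

noncomputable def rho (n : ℕ) (z : Fin n → ℝ) : ℝ := Real.exp (-(∑ i, (z i) ^ 2) / 4)

noncomputable def qd (n : ℕ) (z : Fin n → ℝ) : (Fin n → ℝ) →L[ℝ] ℝ :=
  ∑ i, ((2 : ℝ) * z i) • (ContinuousLinearMap.proj i : (Fin n → ℝ) →L[ℝ] ℝ)

theorem qd_single (n : ℕ) (z : Fin n → ℝ) (i : Fin n) : qd n z (Pi.single i 1) = 2 * z i := by
  simp only [qd, ContinuousLinearMap.sum_apply, ContinuousLinearMap.smul_apply,
    ContinuousLinearMap.proj_apply, smul_eq_mul]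
  rw [Finset.sum_eq_single i]
  · simp
  · intro j _ hj; simp [Pi.single_eq_of_ne hj]
  · simp

theorem hq_thm (n : ℕ) (z : Fin n → ℝ) :
    HasFDerivAt (fun z : Fin n → ℝ => ∑ i, (z i) ^ 2) (qd n z) z := by
  apply HasFDerivAt.fun_sum
  intro i _
  have h := (hasFDerivAt_apply (𝕜 := ℝ) i z).mul (hasFDerivAt_apply (𝕜 := ℝ) i z)
  have e : (fun f : Fin n → ℝ => f i ^ 2) = fun f : Fin n → ℝ => f i * f i := by
    funext w; ring
  rw [e]
  refine h.congr_fderiv ?_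
  ext v; simp [two_mul, add_mul]

theorem hrho_thm (n : ℕ) (z : Fin n → ℝ) :
    HasFDerivAt (rho n) ((-(rho n z) / 4) • qd n z) z := by
  have e2 : Real.exp ((-(1/4) : ℝ) * ∑ i, (z i) ^ 2) = rho n z := by
    unfold rho; congr 1; ring
  have h := ((hq_thm n z).const_mul (-(1/4) : ℝ)).exp
  rw [e2, smul_smul] at h
  have e : rho n = fun w : Fin n → ℝ => Real.exp ((-(1/4) : ℝ) * ∑ i, (w i) ^ 2) := by
    funext w; unfold rho; congr 1; ring
  have e3 : ((-(rho n z) / 4) : ℝ) = rho n z * (-(1/4)) := by ring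
  rw [e3, e]
  simpa only [e2] using h

noncomputable def gd (n : ℕ) (f : (Fin n → ℝ) → ℝ) (z : Fin n → ℝ) : (Fin n → ℝ) →L[ℝ] ℝ :=
  (f z ^ 2) • ((-(rho n z)/4) • qd n z) + rho n z • (f z • fderiv ℝ f z + f z • fderiv ℝ f z)

theorem hg_thm (n : ℕ) (f : (Fin n → ℝ) → ℝ) (hf : ContDiff ℝ 1 f) (z : Fin n → ℝ) :
    HasFDerivAt (fun z => (f z) ^ 2 * rho n z) (gd n f z) z := by
  have hd := (hf.differentiable one_ne_zero z).hasFDerivAt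
  have hsq : HasFDerivAt (fun z => (f z) ^ 2) (f z • fderiv ℝ f z + f z • fderiv ℝ f z) z := by
    have e : (fun z => (f z) ^ 2) = fun z => f z * f z := by funext w; ring
    rw [e]; exact hd.mul hd
  exact hsq.mul (hrho_thm n z)

theorem gd_single (n : ℕ) (f : (Fin n → ℝ) → ℝ) (z : Fin n → ℝ) (i : Fin n) :
    gd n f z (Pi.single i 1) =
      2 * f z * (fderiv ℝ f z (Pi.single i 1)) * rho n z
        - (z i / 2) * ((f z) ^ 2 * rho n z) := by
  simp only [gd, ContinuousLinearMap.add_apply, ContinuousLinearMap.smul_apply, smul_eq_mul,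
    qd_single]
  ring

theorem rho_pos (n : ℕ) (z : Fin n → ℝ) : 0 < rho n z := Real.exp_pos _

theorem rho_continuous (n : ℕ) : Continuous (rho n) := by
  unfold rho
  exact Real.continuous_exp.comp
    ((continuous_finset_sum _ fun i _ => (continuous_apply i).pow 2).neg.div_const 4)

theorem weighted_poincare (n : ℕ) (hn : 1 ≤ n) :
    ∃ C : ℝ, 0 < C ∧ ∀ f : (Fin n → ℝ) → ℝ, ContDiff ℝ 1 f →
      Integrable (fun z : Fin n → ℝ => (f z) ^ 2 * rho n z) →
      Integrable (fun z : Fin n → ℝ =>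
        (∑ i, (fderiv ℝ f z (Pi.single i 1)) ^ 2) * rho n z) →
      (∫ z : Fin n → ℝ, (∑ i, (z i) ^ 2) * (f z) ^ 2 * rho n z) ≤
        C * ((∫ z : Fin n → ℝ, (f z) ^ 2 * rho n z) +
          ∫ z : Fin n → ℝ, (∑ i, (fderiv ℝ f z (Pi.single i 1)) ^ 2) * rho n z) := by
  classical
  refine ⟨4 * n + 16, by positivity, ?_⟩
  intro f hf hA hB
  set df : Fin n → (Fin n → ℝ) → ℝ := fun i z => fderiv ℝ f z (Pi.single i 1) with hdf_def
  have hAnn : 0 ≤ ∫ z : Fin n → ℝ, (f z) ^ 2 * rho n z :=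
    integral_nonneg fun z => mul_nonneg (sq_nonneg _) (rho_pos n z).le
  have hBnn : 0 ≤ ∫ z : Fin n → ℝ, (∑ i, (df i z) ^ 2) * rho n z :=
    integral_nonneg fun z =>
      mul_nonneg (Finset.sum_nonneg fun i _ => sq_nonneg _) (rho_pos n z).le
  by_cases hD : Integrable (fun z : Fin n → ℝ => (∑ i, (z i) ^ 2) * (f z) ^ 2 * rho n z)
  swap
  · rw [integral_undef hD]
    have : (0:ℝ) ≤ (n:ℝ) := Nat.cast_nonneg n
    nlinarith
  -- continuity facts
  have hcf : Continuous f := hf.continuous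
  have hcdf : Continuous fun z => fderiv ℝ f z := hf.continuous_fderiv one_ne_zero
  have hcdfi : ∀ i, Continuous (df i) := fun i =>
    (ContinuousLinearMap.apply ℝ ℝ (Pi.single i 1 : Fin n → ℝ)).continuous.comp hcdf
  -- integrability of the pieces
  have hBi : ∀ i, Integrable (fun z : Fin n → ℝ => (df i z) ^ 2 * rho n z) := by
    intro i
    refine hB.mono' ((((hcdfi i).pow 2).mul (rho_continuous n)).aestronglyMeasurable)
      (Filter.Eventually.of_forall fun z => ?_)
    rw [Real.norm_eq_abs, abs_of_nonneg (mul_nonneg (sq_nonneg _) (rho_pos n z).le)]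
    exact mul_le_mul_of_nonneg_right
      (Finset.single_le_sum (f := fun j => (df j z) ^ 2) (fun j _ => sq_nonneg _)
        (Finset.mem_univ i)) (rho_pos n z).le
  have hzi2 : ∀ i, Integrable (fun z : Fin n → ℝ => (z i) ^ 2 * (f z) ^ 2 * rho n z) := by
    intro i
    refine hD.mono' ((((continuous_apply i).pow 2).mul (hcf.pow 2)).mul
      (rho_continuous n)).aestronglyMeasurable (Filter.Eventually.of_forall fun z => ?_)
    rw [Real.norm_eq_abs, abs_of_nonneg
      (mul_nonneg (mul_nonneg (sq_nonneg _) (sq_nonneg _)) (rho_pos n z).le)]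
    have h1 : (z i) ^ 2 ≤ ∑ j, (z j) ^ 2 :=
      Finset.single_le_sum (f := fun j => (z j) ^ 2) (fun j _ => sq_nonneg _)
        (Finset.mem_univ i)
    have h2 : (0:ℝ) ≤ (f z) ^ 2 * rho n z := mul_nonneg (sq_nonneg _) (rho_pos n z).le
    calc (z i) ^ 2 * (f z) ^ 2 * rho n z = (z i) ^ 2 * ((f z) ^ 2 * rho n z) := by ring
      _ ≤ (∑ j, (z j) ^ 2) * ((f z) ^ 2 * rho n z) := mul_le_mul_of_nonneg_right h1 h2
      _ = (∑ j, (z j) ^ 2) * (f z) ^ 2 * rho n z := by ring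
  have hzif : ∀ i, Integrable (fun z : Fin n → ℝ => z i * f z * df i z * rho n z) := by
    intro i
    refine (((hzi2 i).const_mul (1/2)).add ((hBi i).const_mul (1/2))).mono'
      ((((continuous_apply i).mul hcf).mul (hcdfi i)).mul
        (rho_continuous n)).aestronglyMeasurable (Filter.Eventually.of_forall fun z => ?_)
    rw [Real.norm_eq_abs,
      show z i * f z * df i z * rho n z = (z i * f z * df i z) * rho n z from by ring,
      abs_mul, abs_of_pos (rho_pos n z)]
    have hb : |z i * f z * df i z| ≤ 1/2 * ((z i) ^ 2 * (f z) ^ 2) + 1/2 * (df i z) ^ 2 := by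
      refine abs_le.mpr ⟨?_, ?_⟩
      · nlinarith [sq_nonneg (z i * f z + df i z)]
      · nlinarith [sq_nonneg (z i * f z - df i z)]
    calc |z i * f z * df i z| * rho n z
        ≤ (1/2 * ((z i) ^ 2 * (f z) ^ 2) + 1/2 * (df i z) ^ 2) * rho n z :=
          mul_le_mul_of_nonneg_right hb (rho_pos n z).le
      _ = 1/2 * ((z i) ^ 2 * (f z) ^ 2 * rho n z) + 1/2 * ((df i z) ^ 2 * rho n z) := by ring
  have hfg : ∀ i, Integrable (fun z : Fin n → ℝ => z i * ((f z) ^ 2 * rho n z)) := by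
    intro i
    refine ((hA.const_mul (1/2)).add ((hzi2 i).const_mul (1/2))).mono'
      ((continuous_apply i).mul ((hcf.pow 2).mul (rho_continuous n))).aestronglyMeasurable
      (Filter.Eventually.of_forall fun z => ?_)
    rw [Real.norm_eq_abs, abs_mul,
      abs_of_nonneg (mul_nonneg (sq_nonneg (f z)) (rho_pos n z).le)]
    have hb : |z i| ≤ 1/2 + 1/2 * (z i) ^ 2 := by
      refine abs_le.mpr ⟨?_, ?_⟩
      · nlinarith [sq_nonneg (z i + 1)]
      · nlinarith [sq_nonneg (z i - 1)]
    have h2 : (0:ℝ) ≤ (f z) ^ 2 * rho n z := mul_nonneg (sq_nonneg _) (rho_pos n z).le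
    calc |z i| * ((f z) ^ 2 * rho n z)
        ≤ (1/2 + 1/2 * (z i) ^ 2) * ((f z) ^ 2 * rho n z) :=
          mul_le_mul_of_nonneg_right hb h2
      _ = 1/2 * ((f z) ^ 2 * rho n z) + 1/2 * ((z i) ^ 2 * (f z) ^ 2 * rho n z) := by ring
  -- fderiv facts
  have hu' : ∀ (i : Fin n) (z : Fin n → ℝ),
      fderiv ℝ (fun w : Fin n → ℝ => w i) z (Pi.single i 1) = 1 := by
    intro i z
    rw [(hasFDerivAt_apply (𝕜 := ℝ) i z).fderiv]
    simp
  have hg' : ∀ z : Fin n → ℝ,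
      fderiv ℝ (fun z => (f z) ^ 2 * rho n z) z = gd n f z := fun z =>
    (hg_thm n f hf z).fderiv
  -- integration by parts, coordinatewise
  have key : ∀ i : Fin n,
      (∫ z : Fin n → ℝ, (z i) ^ 2 * (f z) ^ 2 * rho n z) ≤
        4 * (∫ z : Fin n → ℝ, (f z) ^ 2 * rho n z)
          + 16 * ∫ z : Fin n → ℝ, (df i z) ^ 2 * rho n z := by
    intro i
    have h2 : Integrable (fun z : Fin n → ℝ =>
        z i * fderiv ℝ (fun z => (f z) ^ 2 * rho n z) z (Pi.single i 1)) := by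
      refine (((hzif i).const_mul 2).sub ((hzi2 i).const_mul (1/2))).congr
        (Filter.Eventually.of_forall fun z => ?_)
      simp only [Pi.sub_apply]
      rw [hg' z, gd_single]
      ring
    have h1 : Integrable (fun z : Fin n → ℝ =>
        fderiv ℝ (fun w : Fin n → ℝ => w i) z (Pi.single i 1) * ((f z) ^ 2 * rho n z)) := by
      refine hA.congr (Filter.Eventually.of_forall fun z => ?_)
      simp [hu' i z]
    have hudiff : Differentiable ℝ (fun w : Fin n → ℝ => w i) := fun z =>
      (hasFDerivAt_apply (𝕜 := ℝ) i z).differentiableAt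
    have hgdiff : Differentiable ℝ (fun z => (f z) ^ 2 * rho n z) := fun z =>
      (hg_thm n f hf z).differentiableAt
    have ibp := integral_mul_fderiv_eq_neg_fderiv_mul_of_integrable h1 h2 (hfg i)
      (fun x _ => hudiff x) (fun x _ => hgdiff x)
    simp only [hg', gd_single, hu' i, one_mul] at ibp
    have e3 : (fun z : Fin n → ℝ =>
        z i * (2 * f z * df i z * rho n z - z i / 2 * ((f z) ^ 2 * rho n z))) =
        fun z : Fin n → ℝ => 2 * (z i * f z * df i z * rho n z)
          - (1/2) * ((z i) ^ 2 * (f z) ^ 2 * rho n z) := funext fun z => by ring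
    rw [e3, integral_sub ((hzif i).const_mul 2) ((hzi2 i).const_mul (1/2)),
      integral_const_mul, integral_const_mul] at ibp
    have hmono : (∫ z : Fin n → ℝ, z i * f z * df i z * rho n z) ≤
        ∫ z : Fin n → ℝ, 1/8 * ((z i) ^ 2 * (f z) ^ 2 * rho n z)
          + 2 * ((df i z) ^ 2 * rho n z) := by
      refine integral_mono (hzif i)
        (((hzi2 i).const_mul (1/8)).add ((hBi i).const_mul 2)) (fun z => ?_)
      nlinarith [mul_nonneg (sq_nonneg (z i * f z - 4 * df i z)) (rho_pos n z).le]
    rw [integral_add ((hzi2 i).const_mul (1/8)) ((hBi i).const_mul 2),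
      integral_const_mul, integral_const_mul] at hmono
    linarith
  -- assemble
  have eD : (∫ z : Fin n → ℝ, (∑ i, (z i) ^ 2) * (f z) ^ 2 * rho n z) =
      ∑ i, ∫ z : Fin n → ℝ, (z i) ^ 2 * (f z) ^ 2 * rho n z := by
    have e : (fun z : Fin n → ℝ => (∑ i, (z i) ^ 2) * (f z) ^ 2 * rho n z) =
        fun z : Fin n → ℝ => ∑ i, (z i) ^ 2 * (f z) ^ 2 * rho n z := by
      funext z; rw [Finset.sum_mul, Finset.sum_mul]
    rw [e, integral_finset_sum _ (fun i _ => hzi2 i)]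
  have eB : (∫ z : Fin n → ℝ, (∑ i, (df i z) ^ 2) * rho n z) =
      ∑ i, ∫ z : Fin n → ℝ, (df i z) ^ 2 * rho n z := by
    have e : (fun z : Fin n → ℝ => (∑ i, (df i z) ^ 2) * rho n z) =
        fun z : Fin n → ℝ => ∑ i, (df i z) ^ 2 * rho n z := by
      funext z; rw [Finset.sum_mul]
    rw [e, integral_finset_sum _ (fun i _ => hBi i)]
  have hsum : (∫ z : Fin n → ℝ, (∑ i, (z i) ^ 2) * (f z) ^ 2 * rho n z) ≤
      4 * n * (∫ z : Fin n → ℝ, (f z) ^ 2 * rho n z)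
        + 16 * ∫ z : Fin n → ℝ, (∑ i, (df i z) ^ 2) * rho n z := by
    rw [eD, eB, Finset.mul_sum]
    calc (∑ i, ∫ z : Fin n → ℝ, (z i) ^ 2 * (f z) ^ 2 * rho n z)
        ≤ ∑ i : Fin n, (4 * (∫ z : Fin n → ℝ, (f z) ^ 2 * rho n z)
            + 16 * ∫ z : Fin n → ℝ, (df i z) ^ 2 * rho n z) :=
          Finset.sum_le_sum fun i _ => key i
      _ = 4 * n * (∫ z : Fin n → ℝ, (f z) ^ 2 * rho n z)
            + ∑ i : Fin n, 16 * ∫ z : Fin n → ℝ, (df i z) ^ 2 * rho n z := by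
          rw [Finset.sum_add_distrib, Finset.sum_const, Finset.card_univ, Fintype.card_fin,
            nsmul_eq_mul]
          ring
  have hBnn' : 0 ≤ ∫ z : Fin n → ℝ, (∑ i, (df i z) ^ 2) * rho n z := hBnn
  have hncast : (0:ℝ) ≤ (n:ℝ) := Nat.cast_nonneg n
  nlinarith [hAnn, hBnn']
end
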